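/- The product of two zig-zag matrices is again a zig-zag matrix: for a, b ∈ ℝ^M and c, d ∈ ℝ^{M-1} one has Z(a,c) · Z(b,d) = Z(u,v), where u_j = a_j b_j for j = 1,…,M, and, for k = 1,…,M−1, v_k = c_k b_k + a_{k+1} d_k when k is odd and v_k = a_k d_k + c_k b_{k+1} when k is even. -/
import Mathlib


/-- The `M × M` zig-zag matrix `Z(a,c)` built from the (1-based) diagonal
parameters `a₁, …, a_M` and off-diagonal parameters `c₁, …, c_{M-1}`:
`Z[i,i] = aᵢ` for all `i`; for every even (1-based) row index `i`,
`Z[i,i-1] = c_{i-1}` and (when `i+1 ≤ M`) `Z[i,i+1] = cᵢ`; all other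
entries vanish.  (Rows/columns `i : Fin M` carry the 1-based label `i.val + 1`.) -/
def zigzag (M : ℕ) (a c : ℕ → ℝ) : Matrix (Fin M) (Fin M) ℝ :=
  Matrix.of fun i j =>
    if i.val = j.val then a (i.val + 1)
    else if (i.val + 1) % 2 = 0 ∧ j.val + 1 = i.val then c (j.val + 1)
    else if (i.val + 1) % 2 = 0 ∧ j.val = i.val + 1 then c (i.val + 1)
    else 0

/-- Off-diagonal part of a zig-zag matrix. -/
def zigzagN (M : ℕ) (c : ℕ → ℝ) : Matrix (Fin M) (Fin M) ℝ :=
  Matrix.of fun i j =>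
    if (i.val + 1) % 2 = 0 ∧ j.val + 1 = i.val then c (j.val + 1)
    else if (i.val + 1) % 2 = 0 ∧ j.val = i.val + 1 then c (i.val + 1)
    else 0

lemma zigzag_decomp (M : ℕ) (a c : ℕ → ℝ) :
    zigzag M a c = Matrix.diagonal (fun i : Fin M => a (i.val + 1)) + zigzagN M c := by
  ext i j
  simp only [zigzag, zigzagN, Matrix.of_apply, Matrix.add_apply, Matrix.diagonal_apply,
    Fin.ext_iff]
  split_ifs <;> first | omega | ring1

lemma zigzagN_mul_zigzagN (M : ℕ) (c d : ℕ → ℝ) :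
    zigzagN M c * zigzagN M d = 0 := by
  ext i j
  simp only [Matrix.mul_apply, zigzagN, Matrix.of_apply, Matrix.zero_apply]
  apply Finset.sum_eq_zero
  intro k _
  split_ifs <;> first | omega | ring1

/-- The product of two zig-zag matrices is again a zig-zag matrix:
`Z(a,c) · Z(b,d) = Z(u,v)` with `uⱼ = aⱼ bⱼ` and, for `k = 1, …, M-1`,
`v_k = c_k b_k + a_{k+1} d_k` for odd `k` and `v_k = a_k d_k + c_k b_{k+1}`
for even `k`. -/
theorem zigzag_mul (M : ℕ) (a c b d : ℕ → ℝ) :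
    zigzag M a c * zigzag M b d
      = zigzag M (fun j => a j * b j)
          (fun k => if k % 2 = 1 then c k * b k + a (k + 1) * d k
                    else a k * d k + c k * b (k + 1)) := by
  rw [zigzag_decomp M a c, zigzag_decomp M b d, zigzag_decomp M (fun j => a j * b j),
    add_mul, mul_add, mul_add, zigzagN_mul_zigzagN, Matrix.diagonal_mul_diagonal, add_zero]
  have key : Matrix.diagonal (fun i : Fin M => a (i.val + 1)) * zigzagN M d
      + zigzagN M c * Matrix.diagonal (fun i : Fin M => b (i.val + 1))
      = zigzagN M (fun k => if k % 2 = 1 then c k * b k + a (k + 1) * d k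
                    else a k * d k + c k * b (k + 1)) := by
    ext i j
    simp only [Matrix.add_apply, Matrix.diagonal_mul, Matrix.mul_diagonal, zigzagN,
      Matrix.of_apply]
    split_ifs <;>
      first
      | omega
      | ring1
      | (obtain ⟨-, h2⟩ := ‹_ ∧ _›; rw [h2]; try ring1)
  rw [add_assoc, key]
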